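/- Let m ≥ 1 and let X₁, …, Xₘ, Z₁, …, Zₘ be 2m mutually independent Gaussian random variables, each Xᵢ with law gaussianReal 0 vₓ and each Zᵢ with law gaussianReal 0 v_z. Then the Gauss-optimal estimator c₃⁽ʰ'ᴳᵒ⁾ = ( (m+2)·\overline{X²Z} − m·\overline{X²}·Z̄ ) / (m+1) has variance Var(c₃⁽ʰ'ᴳᵒ⁾) = 2(m+2)·vₓ²·v_z / (m(m+1)). -/

import Mathlib

open MeasureTheory ProbabilityTheory Real
open scoped NNReal ENNReal


lemma aux_integrable_pow_gauss {b : ℝ} (hb : 0 < b) (n : ℕ) :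
    Integrable (fun x : ℝ => x ^ n * Real.exp (-b * x ^ 2)) := by
  have hs : (-1 : ℝ) < (n : ℝ) := lt_of_lt_of_le (by norm_num) (Nat.cast_nonneg n)
  simpa [Real.rpow_natCast] using integrable_rpow_mul_exp_neg_mul_sq hb hs

lemma aux_hasDerivAt_exp_gauss (b x : ℝ) :
    HasDerivAt (fun x : ℝ => Real.exp (-b * x ^ 2)) (Real.exp (-b * x ^ 2) * (-b * (2 * x))) x := by
  have h1 : HasDerivAt (fun x : ℝ => -b * x ^ 2) (-b * (2 * x)) x := by
    simpa using (hasDerivAt_pow 2 x).const_mul (-b)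
  exact h1.exp

lemma aux_integral_mul_gauss_zero {b : ℝ} (hb : 0 < b) :
    ∫ x : ℝ, x * Real.exp (-b * x ^ 2) = 0 := by
  have hb' : (2 * b) ≠ 0 := by positivity
  have hderiv : ∀ x : ℝ, HasDerivAt (fun x : ℝ => -(2 * b)⁻¹ * Real.exp (-b * x ^ 2))
      (x * Real.exp (-b * x ^ 2)) x := by
    intro x
    have := (aux_hasDerivAt_exp_gauss b x).const_mul (-(2 * b)⁻¹)
    refine this.congr_deriv ?_
    field_simp
  have h1 : Integrable (fun x : ℝ => x * Real.exp (-b * x ^ 2)) :=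
    integrable_mul_exp_neg_mul_sq hb
  have h2 : Integrable (fun x : ℝ => -(2 * b)⁻¹ * Real.exp (-b * x ^ 2)) :=
    (integrable_exp_neg_mul_sq hb).const_mul _
  exact integral_eq_zero_of_hasDerivAt_of_integrable hderiv h1 h2

lemma aux_gauss_rec {b : ℝ} (hb : 0 < b) (k : ℕ) :
    ∫ x : ℝ, x ^ (k + 2) * Real.exp (-b * x ^ 2)
      = ((k + 1 : ℝ) / (2 * b)) * ∫ x : ℝ, x ^ k * Real.exp (-b * x ^ 2) := by
  have hb' : (2 * b) ≠ 0 := by positivity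
  set φ : ℝ → ℝ := fun x => (k + 1 : ℝ) * (x ^ k * Real.exp (-b * x ^ 2))
      - (2 * b) * (x ^ (k + 2) * Real.exp (-b * x ^ 2)) with hφ
  have hderiv : ∀ x : ℝ, HasDerivAt (fun x : ℝ => x ^ (k + 1) * Real.exp (-b * x ^ 2)) (φ x) x := by
    intro x
    have h1 : HasDerivAt (fun x : ℝ => x ^ (k + 1)) ((k + 1 : ℝ) * x ^ k) x := by
      simpa using hasDerivAt_pow (k + 1) x
    have := h1.mul (aux_hasDerivAt_exp_gauss b x)
    refine this.congr_deriv ?_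
    simp only [hφ]
    ring
  have hφint : Integrable φ :=
    ((aux_integrable_pow_gauss hb k).const_mul _).sub
      ((aux_integrable_pow_gauss hb (k + 2)).const_mul _)
  have h0 := integral_eq_zero_of_hasDerivAt_of_integrable hderiv hφint
    (aux_integrable_pow_gauss hb (k + 1))
  rw [hφ] at h0
  rw [integral_sub ((aux_integrable_pow_gauss hb k).const_mul _)
    ((aux_integrable_pow_gauss hb (k + 2)).const_mul _), integral_const_mul,
    integral_const_mul] at h0
  have h2 : (2 * b) * ∫ x : ℝ, x ^ (k + 2) * Real.exp (-b * x ^ 2)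
      = (k + 1 : ℝ) * ∫ x : ℝ, x ^ k * Real.exp (-b * x ^ 2) := by linarith
  rw [div_mul_eq_mul_div, eq_div_iff hb']
  linarith

lemma aux_gauss_I2 {b : ℝ} (hb : 0 < b) :
    ∫ x : ℝ, x ^ 2 * Real.exp (-b * x ^ 2) = (1 / (2 * b)) * Real.sqrt (π / b) := by
  have h := aux_gauss_rec hb 0
  simp only [pow_zero, one_mul] at h
  rw [h, integral_gaussian]
  norm_num

lemma aux_gauss_I4 {b : ℝ} (hb : 0 < b) :
    ∫ x : ℝ, x ^ 4 * Real.exp (-b * x ^ 2) = (3 / (4 * b ^ 2)) * Real.sqrt (π / b) := by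
  have h := aux_gauss_rec hb 2
  rw [show (2:ℕ)+2 = 4 from rfl] at h
  rw [h, aux_gauss_I2 hb]
  field_simp
  ring

lemma aux_pdf_eq (v : NNReal) (x : ℝ) :
    gaussianPDFReal 0 v x = (Real.sqrt (2 * π * v))⁻¹ * Real.exp (-(2 * (v : ℝ))⁻¹ * x ^ 2) := by
  rw [gaussianPDFReal]
  congr 1
  ring_nf

lemma aux_gaussianReal_integral (v : NNReal) (hv : v ≠ 0) (g : ℝ → ℝ) :
    ∫ x, g x ∂(gaussianReal 0 v) = ∫ x, gaussianPDFReal 0 v x * g x := by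
  rw [gaussianReal_of_var_ne_zero _ hv, gaussianPDF_def]
  have hmeas : Measurable fun x => Real.toNNReal (gaussianPDFReal 0 v x) :=
    (measurable_gaussianPDFReal 0 v).real_toNNReal
  rw [show (fun x => ENNReal.ofReal (gaussianPDFReal 0 v x))
      = (fun x => ((Real.toNNReal (gaussianPDFReal 0 v x) : ℝ≥0) : ℝ≥0∞)) from rfl]
  rw [integral_withDensity_eq_integral_smul hmeas]
  congr 1
  funext x
  rw [NNReal.smul_def, Real.coe_toNNReal _ (gaussianPDFReal_nonneg 0 v x), smul_eq_mul]

lemma aux_gaussianReal_integrable (v : NNReal) (hv : v ≠ 0) (g : ℝ → ℝ)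
    (h : Integrable (fun x => gaussianPDFReal 0 v x * g x)) :
    Integrable g (gaussianReal 0 v) := by
  rw [gaussianReal_of_var_ne_zero _ hv, gaussianPDF_def]
  have hmeas : Measurable fun x => Real.toNNReal (gaussianPDFReal 0 v x) :=
    (measurable_gaussianPDFReal 0 v).real_toNNReal
  rw [show (fun x => ENNReal.ofReal (gaussianPDFReal 0 v x))
      = (fun x => ((Real.toNNReal (gaussianPDFReal 0 v x) : ℝ≥0) : ℝ≥0∞)) from rfl]
  rw [integrable_withDensity_iff_integrable_smul hmeas]
  apply h.congr
  filter_upwards with x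
  rw [NNReal.smul_def, Real.coe_toNNReal _ (gaussianPDFReal_nonneg 0 v x), smul_eq_mul]

lemma aux_gauss_pow_int (v : ℝ≥0) (n : ℕ) :
    Integrable (fun x : ℝ => x ^ n) (gaussianReal 0 v) := by
  by_cases hv : v = 0
  · subst hv
    rw [gaussianReal_zero_var]
    exact (integrable_const ((0:ℝ) ^ n)).congr (ae_eq_dirac fun x : ℝ => x ^ n).symm
  · have hv' : 0 < (v : ℝ) := by positivity
    have hb : 0 < (2 * (v : ℝ))⁻¹ := by positivity
    apply aux_gaussianReal_integrable v hv
    apply ((aux_integrable_pow_gauss hb n).const_mul (Real.sqrt (2 * π * v))⁻¹).congr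
    filter_upwards with x
    rw [aux_pdf_eq]
    ring

lemma aux_gauss_moment_one (v : ℝ≥0) : ∫ x, x ∂(gaussianReal 0 v) = 0 := by
  by_cases hv : v = 0
  · subst hv; rw [gaussianReal_zero_var, integral_dirac]
  · have hv' : 0 < (v : ℝ) := by positivity
    have hb : 0 < (2 * (v : ℝ))⁻¹ := by positivity
    rw [aux_gaussianReal_integral v hv]
    have : (fun x => gaussianPDFReal 0 v x * x)
        = fun x => (Real.sqrt (2 * π * v))⁻¹ * (x * Real.exp (-(2 * (v : ℝ))⁻¹ * x ^ 2)) := by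
      funext x; rw [aux_pdf_eq]; ring
    rw [this, integral_const_mul, aux_integral_mul_gauss_zero hb, mul_zero]

lemma aux_gauss_moment_two (v : ℝ≥0) : ∫ x, x ^ 2 ∂(gaussianReal 0 v) = (v : ℝ) := by
  by_cases hv : v = 0
  · subst hv; rw [gaussianReal_zero_var, integral_dirac]; simp
  · have hv' : 0 < (v : ℝ) := by positivity
    have hb : 0 < (2 * (v : ℝ))⁻¹ := by positivity
    rw [aux_gaussianReal_integral v hv]
    have : (fun x => gaussianPDFReal 0 v x * x ^ 2)
        = fun x => (Real.sqrt (2 * π * v))⁻¹ * (x ^ 2 * Real.exp (-(2 * (v : ℝ))⁻¹ * x ^ 2)) := by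
      funext x; rw [aux_pdf_eq]; ring
    rw [this, integral_const_mul, aux_gauss_I2 hb]
    have harg : π / (2 * (v : ℝ))⁻¹ = 2 * π * v := by field_simp
    rw [harg]
    have hs : Real.sqrt (2 * π * (v : ℝ)) ≠ 0 := by
      refine ne_of_gt (Real.sqrt_pos.2 ?_); positivity
    field_simp

lemma aux_gauss_moment_four (v : ℝ≥0) : ∫ x, x ^ 4 ∂(gaussianReal 0 v) = 3 * (v : ℝ) ^ 2 := by
  by_cases hv : v = 0
  · subst hv; rw [gaussianReal_zero_var, integral_dirac]; simp
  · have hv' : 0 < (v : ℝ) := by positivity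
    have hb : 0 < (2 * (v : ℝ))⁻¹ := by positivity
    rw [aux_gaussianReal_integral v hv]
    have : (fun x => gaussianPDFReal 0 v x * x ^ 4)
        = fun x => (Real.sqrt (2 * π * v))⁻¹ * (x ^ 4 * Real.exp (-(2 * (v : ℝ))⁻¹ * x ^ 2)) := by
      funext x; rw [aux_pdf_eq]; ring
    rw [this, integral_const_mul, aux_gauss_I4 hb]
    have harg : π / (2 * (v : ℝ))⁻¹ = 2 * π * v := by field_simp
    rw [harg]
    have hs : Real.sqrt (2 * π * (v : ℝ)) ≠ 0 := by
      refine ne_of_gt (Real.sqrt_pos.2 ?_); positivity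
    field_simp
    ring

lemma aux_prod_indep {Ω : Type*} [MeasurableSpace Ω] {μ : Measure Ω} [IsProbabilityMeasure μ]
    {ι : Type*} [DecidableEq ι] {F : ι → Ω → ℝ}
    (h : iIndepFun F μ)
    (hmeas : ∀ i, Measurable (F i)) (hint : ∀ i, Integrable (F i) μ)
    (s : Finset ι) :
    Integrable (fun ω => ∏ i ∈ s, F i ω) μ ∧
      (∫ ω, ∏ i ∈ s, F i ω ∂μ) = ∏ i ∈ s, ∫ ω, F i ω ∂μ := by
  induction s using Finset.induction_on with
  | empty => simp
  | insert a s ha ih =>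
    have hip : IndepFun (F a) (fun ω => ∏ i ∈ s, F i ω) μ := by
      have h1 := (h.indepFun_finset_prod_of_notMem hmeas ha).symm
      have h2 : (∏ j ∈ s, F j) = fun ω => ∏ i ∈ s, F i ω := by
        funext ω; exact Finset.prod_apply ω s F
      rwa [h2] at h1
    constructor
    · have := hip.integrable_mul (hint a) ih.1
      apply this.congr
      filter_upwards with ω
      rw [Finset.prod_insert ha]
      rfl
    · have hmul := hip.integral_mul_eq_mul_integral (hint a).1 ih.1.1
      calc (∫ ω, ∏ i ∈ insert a s, F i ω ∂μ)
          = ∫ ω, F a ω * ∏ i ∈ s, F i ω ∂μ := by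
            congr 1; funext ω; rw [Finset.prod_insert ha]
        _ = (∫ ω, F a ω ∂μ) * ∫ ω, ∏ i ∈ s, F i ω ∂μ := hmul
        _ = ∏ i ∈ insert a s, ∫ ω, F i ω ∂μ := by rw [Finset.prod_insert ha, ih.2]

theorem variance_c3_h_Go_gaussian {Ω : Type*} [MeasurableSpace Ω]
    (μ : Measure Ω) [IsProbabilityMeasure μ]
    (m : ℕ) (hm : 1 ≤ m) (vx vz : NNReal)
    (X Z : Fin m → Ω → ℝ)
    (hXmeas : ∀ i, Measurable (X i))
    (hZmeas : ∀ i, Measurable (Z i))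
    (hindep : iIndepFun (Sum.elim X Z) μ)
    (hlawX : ∀ i, Measure.map (X i) μ = gaussianReal 0 vx)
    (hlawZ : ∀ i, Measure.map (Z i) μ = gaussianReal 0 vz) :
    variance (fun ω => (((m:ℝ)+2) * ((m:ℝ)⁻¹ * ∑ i, (X i ω)^2 * Z i ω) - (m:ℝ) * ((m:ℝ)⁻¹ * ∑ i, (X i ω)^2) * ((m:ℝ)⁻¹ * ∑ i, Z i ω)) / ((m:ℝ)+1)) μ = 2 * ((m:ℝ)+2) * (vx:ℝ)^2 * (vz:ℝ) / ((m:ℝ) * ((m:ℝ)+1)) := by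
  classical
  have hm0 : (m:ℝ) ≠ 0 := Nat.cast_ne_zero.mpr (by omega)
  have hm1 : ((m:ℝ)+1) ≠ 0 := by positivity
  -- single-variable integrability and moments
  have hXint : ∀ (i : Fin m) (n : ℕ), Integrable (fun ω => (X i ω)^n) μ := by
    intro i n
    have h1 : Integrable (fun x : ℝ => x^n) (Measure.map (X i) μ) := by
      rw [hlawX i]; exact aux_gauss_pow_int vx n
    exact (integrable_map_measure ((measurable_id.pow_const n).aestronglyMeasurable)
      (hXmeas i).aemeasurable).mp h1
  have hZint : ∀ (i : Fin m) (n : ℕ), Integrable (fun ω => (Z i ω)^n) μ := by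
    intro i n
    have h1 : Integrable (fun x : ℝ => x^n) (Measure.map (Z i) μ) := by
      rw [hlawZ i]; exact aux_gauss_pow_int vz n
    exact (integrable_map_measure ((measurable_id.pow_const n).aestronglyMeasurable)
      (hZmeas i).aemeasurable).mp h1
  have hXmom : ∀ (i : Fin m) (n : ℕ), (∫ ω, (X i ω)^n ∂μ) = ∫ x, x^n ∂(gaussianReal 0 vx) := by
    intro i n
    rw [← hlawX i]
    exact (integral_map (hXmeas i).aemeasurable
      ((measurable_id.pow_const n).aestronglyMeasurable)).symm
  have hZmom : ∀ (i : Fin m) (n : ℕ), (∫ ω, (Z i ω)^n ∂μ) = ∫ x, x^n ∂(gaussianReal 0 vz) := by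
    intro i n
    rw [← hlawZ i]
    exact (integral_map (hZmeas i).aemeasurable
      ((measurable_id.pow_const n).aestronglyMeasurable)).symm
  have hX2 : ∀ i, (∫ ω, (X i ω)^2 ∂μ) = (vx:ℝ) := fun i => by
    rw [hXmom i 2, aux_gauss_moment_two]
  have hX4 : ∀ i, (∫ ω, (X i ω)^4 ∂μ) = 3*(vx:ℝ)^2 := fun i => by
    rw [hXmom i 4, aux_gauss_moment_four]
  have hZ1 : ∀ i, (∫ ω, (Z i ω)^1 ∂μ) = 0 := fun i => by
    rw [hZmom i 1]; simpa using aux_gauss_moment_one vz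
  have hZ2 : ∀ i, (∫ ω, (Z i ω)^2 ∂μ) = (vz:ℝ) := fun i => by
    rw [hZmom i 2, aux_gauss_moment_two]
  -- product machinery
  have hYmeas : ∀ k, Measurable (Sum.elim X Z k) := by
    rintro (i|i); exacts [hXmeas i, hZmeas i]
  have hYint : ∀ (k) (n : ℕ), Integrable (fun ω => (Sum.elim X Z k ω)^n) μ := by
    rintro (i|i) n; exacts [hXint i n, hZint i n]
  have hprod : ∀ (E : Fin m ⊕ Fin m → ℕ) (s : Finset (Fin m ⊕ Fin m)),
      Integrable (fun ω => ∏ k ∈ s, (Sum.elim X Z k ω)^(E k)) μ ∧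
      (∫ ω, ∏ k ∈ s, (Sum.elim X Z k ω)^(E k) ∂μ)
        = ∏ k ∈ s, ∫ ω, (Sum.elim X Z k ω)^(E k) ∂μ := by
    intro E s
    have hc : iIndepFun
        (fun k => fun ω => (Sum.elim X Z k ω)^(E k)) μ :=
      hindep.comp (fun k => fun x : ℝ => x ^ E k) (fun k => measurable_id.pow_const (E k))
    exact aux_prod_indep hc (fun k => (hYmeas k).pow_const (E k)) (fun k => hYint k (E k)) s
  -- monomial lemmas
  have P2 : ∀ (i j : Fin m), Integrable (fun ω => (X i ω)^2 * (Z j ω)^1) μ ∧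
      (∫ ω, (X i ω)^2 * (Z j ω)^1 ∂μ) = 0 := by
    intro i j
    obtain ⟨h1, h2⟩ := hprod (Sum.elim (fun _ => 2) (fun _ => 1)) {Sum.inl i, Sum.inr j}
    rw [Finset.prod_pair (by simp)] at h2
    simp only [Finset.prod_pair (show (Sum.inl i : Fin m ⊕ Fin m) ≠ Sum.inr j by simp),
      Sum.elim_inl, Sum.elim_inr] at h1 h2
    exact ⟨h1, by rw [h2, hZ1 j, mul_zero]⟩
  have P8 : ∀ (i k : Fin m), Integrable (fun ω => (X i ω)^4 * (Z k ω)^2) μ ∧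
      (∫ ω, (X i ω)^4 * (Z k ω)^2 ∂μ) = 3*(vx:ℝ)^2*(vz:ℝ) := by
    intro i k
    obtain ⟨h1, h2⟩ := hprod (Sum.elim (fun _ => 4) (fun _ => 2)) {Sum.inl i, Sum.inr k}
    simp only [Finset.prod_pair (show (Sum.inl i : Fin m ⊕ Fin m) ≠ Sum.inr k by simp),
      Sum.elim_inl, Sum.elim_inr] at h1 h2
    exact ⟨h1, by rw [h2, hX4 i, hZ2 k]⟩
  have P9 : ∀ (i k l : Fin m), k ≠ l →
      Integrable (fun ω => (X i ω)^4 * ((Z k ω)^1 * (Z l ω)^1)) μ ∧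
      (∫ ω, (X i ω)^4 * ((Z k ω)^1 * (Z l ω)^1) ∂μ) = 0 := by
    intro i k l hkl
    obtain ⟨h1, h2⟩ := hprod (Sum.elim (fun _ => 4) (fun _ => 1))
      {Sum.inl i, Sum.inr k, Sum.inr l}
    simp only [Finset.prod_insert (show (Sum.inl i : Fin m ⊕ Fin m) ∉ {Sum.inr k, Sum.inr l} by simp),
      Finset.prod_pair (show (Sum.inr k : Fin m ⊕ Fin m) ≠ Sum.inr l by simp [hkl]),
      Sum.elim_inl, Sum.elim_inr] at h1 h2
    exact ⟨h1, by rw [h2, hZ1 k]; ring⟩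
  have P10 : ∀ (i j k : Fin m), i ≠ j →
      Integrable (fun ω => (X i ω)^2 * ((X j ω)^2 * (Z k ω)^2)) μ ∧
      (∫ ω, (X i ω)^2 * ((X j ω)^2 * (Z k ω)^2) ∂μ) = (vx:ℝ)^2*(vz:ℝ) := by
    intro i j k hij
    obtain ⟨h1, h2⟩ := hprod (Sum.elim (fun _ => 2) (fun _ => 2))
      {Sum.inl i, Sum.inl j, Sum.inr k}
    simp only [Finset.prod_insert (show (Sum.inl i : Fin m ⊕ Fin m) ∉ {Sum.inl j, Sum.inr k}
        by simp [hij]),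
      Finset.prod_pair (show (Sum.inl j : Fin m ⊕ Fin m) ≠ Sum.inr k by simp),
      Sum.elim_inl, Sum.elim_inr] at h1 h2
    exact ⟨h1, by rw [h2, hX2 i, hX2 j, hZ2 k]; ring⟩
  have P11 : ∀ (i j k l : Fin m), i ≠ j → k ≠ l →
      Integrable (fun ω => (X i ω)^2 * ((X j ω)^2 * ((Z k ω)^1 * (Z l ω)^1))) μ ∧
      (∫ ω, (X i ω)^2 * ((X j ω)^2 * ((Z k ω)^1 * (Z l ω)^1)) ∂μ) = 0 := by
    intro i j k l hij hkl
    obtain ⟨h1, h2⟩ := hprod (Sum.elim (fun _ => 2) (fun _ => 1))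
      {Sum.inl i, Sum.inl j, Sum.inr k, Sum.inr l}
    simp only [Finset.prod_insert (show (Sum.inl i : Fin m ⊕ Fin m) ∉ {Sum.inl j, Sum.inr k, Sum.inr l}
        by simp [hij]),
      Finset.prod_insert (show (Sum.inl j : Fin m ⊕ Fin m) ∉ {Sum.inr k, Sum.inr l} by simp),
      Finset.prod_pair (show (Sum.inr k : Fin m ⊕ Fin m) ≠ Sum.inr l by simp [hkl]),
      Sum.elim_inl, Sum.elim_inr] at h1 h2
    exact ⟨h1, by rw [h2, hZ1 k]; ring⟩
  -- abbreviations
  set c1 : ℝ := ((m:ℝ)+2)/((m:ℝ)*((m:ℝ)+1)) with hc1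
  set c2 : ℝ := 1/((m:ℝ)*((m:ℝ)+1)) with hc2
  set A : Ω → ℝ := fun ω => ∑ i, X i ω ^ 2 * Z i ω with hA
  set B : Ω → ℝ := fun ω => ∑ i, X i ω ^ 2 with hB
  set C : Ω → ℝ := fun ω => ∑ i, Z i ω with hC
  have hTeq : (fun ω => (((m:ℝ)+2) * ((m:ℝ)⁻¹ * ∑ i, (X i ω)^2 * Z i ω) - (m:ℝ) * ((m:ℝ)⁻¹ * ∑ i, (X i ω)^2) * ((m:ℝ)⁻¹ * ∑ i, Z i ω)) / ((m:ℝ)+1))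
      = fun ω => c1 * A ω - c2 * (B ω * C ω) := by
    funext ω
    simp only [hA, hB, hC, hc1, hc2]
    field_simp
  rw [hTeq]
  -- measurability
  have hAmeas : Measurable A := by
    rw [hA]; exact Finset.measurable_sum _ (fun i _ => ((hXmeas i).pow_const 2).mul (hZmeas i))
  have hBmeas : Measurable B := by
    rw [hB]; exact Finset.measurable_sum _ (fun i _ => (hXmeas i).pow_const 2)
  have hCmeas : Measurable C := by
    rw [hC]; exact Finset.measurable_sum _ (fun i _ => hZmeas i)
  -- first moments
  have hAterm : ∀ i : Fin m, Integrable (fun ω => X i ω ^ 2 * Z i ω) μ := fun i => by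
    simpa using (P2 i i).1
  have hAtermval : ∀ i : Fin m, (∫ ω, X i ω ^ 2 * Z i ω ∂μ) = 0 := fun i => by
    have := (P2 i i).2; simpa using this
  have hAint : Integrable A μ := by
    rw [hA]; exact integrable_finset_sum _ (fun i _ => hAterm i)
  have hAval : (∫ ω, A ω ∂μ) = 0 := by
    simp only [hA]
    rw [integral_finset_sum _ (fun i _ => hAterm i)]
    simp [hAtermval]
  have hBCterm : ∀ i j : Fin m, Integrable (fun ω => X i ω ^ 2 * Z j ω) μ := fun i j => by
    simpa using (P2 i j).1
  have hBCtermval : ∀ i j : Fin m, (∫ ω, X i ω ^ 2 * Z j ω ∂μ) = 0 := fun i j => by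
    have := (P2 i j).2; simpa using this
  have hBCeq : (fun ω => B ω * C ω) = fun ω => ∑ i, ∑ j, X i ω ^ 2 * Z j ω := by
    funext ω; simp only [hB, hC]; rw [Finset.sum_mul_sum]
  have hBCint : Integrable (fun ω => B ω * C ω) μ := by
    rw [hBCeq]
    exact integrable_finset_sum _ fun i _ => integrable_finset_sum _ fun j _ => hBCterm i j
  have hBCval : (∫ ω, B ω * C ω ∂μ) = 0 := by
    rw [hBCeq, integral_finset_sum _ (fun i _ => integrable_finset_sum _ fun j _ => hBCterm i j)]
    have hrow : ∀ i : Fin m, (∫ ω, ∑ j, X i ω ^ 2 * Z j ω ∂μ) = 0 := fun i => by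
      rw [integral_finset_sum _ fun j _ => hBCterm i j]; simp [hBCtermval]
    simp [hrow]
  -- a small summation helper
  have hpair : ∀ (w u : ℝ) (i : Fin m), (∑ j : Fin m, if i = j then w else u)
      = (m:ℝ) * u + (w - u) := by
    intro w u i
    have hsplit : ∀ j : Fin m, (if i = j then w else u) = u + (if i = j then w - u else 0) :=
      fun j => by split <;> ring
    simp_rw [hsplit]
    rw [Finset.sum_add_distrib, Finset.sum_const, Finset.sum_ite_eq]
    simp [Finset.card_univ, nsmul_eq_mul]
  -- A * A
  have hA2term : ∀ i j : Fin m,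
      Integrable (fun ω => (X i ω ^ 2 * Z i ω) * (X j ω ^ 2 * Z j ω)) μ ∧
      (∫ ω, (X i ω ^ 2 * Z i ω) * (X j ω ^ 2 * Z j ω) ∂μ)
        = (if i = j then 3*(vx:ℝ)^2*(vz:ℝ) else 0) := by
    intro i j
    by_cases hij : i = j
    · subst hij
      obtain ⟨h1, h2⟩ := P8 i i
      have heq : (fun ω => X i ω ^ 4 * Z i ω ^ 2)
          = fun ω => (X i ω ^ 2 * Z i ω) * (X i ω ^ 2 * Z i ω) := by funext ω; ring
      rw [heq] at h1 h2
      exact ⟨h1, by simp [h2]⟩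
    · obtain ⟨h1, h2⟩ := P11 i j i j hij hij
      have heq : (fun ω => X i ω ^ 2 * (X j ω ^ 2 * (Z i ω ^ 1 * Z j ω ^ 1)))
          = fun ω => (X i ω ^ 2 * Z i ω) * (X j ω ^ 2 * Z j ω) := by funext ω; ring
      rw [heq] at h1 h2
      exact ⟨h1, by simp [h2, hij]⟩
  have hA2eq : (fun ω => A ω * A ω)
      = fun ω => ∑ i, ∑ j, (X i ω ^ 2 * Z i ω) * (X j ω ^ 2 * Z j ω) := by
    funext ω; simp only [hA]; rw [Finset.sum_mul_sum]
  have hA2int : Integrable (fun ω => A ω * A ω) μ := by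
    rw [hA2eq]
    exact integrable_finset_sum _ fun i _ => integrable_finset_sum _ fun j _ => (hA2term i j).1
  have hA2val : (∫ ω, A ω * A ω ∂μ) = 3*(m:ℝ)*(vx:ℝ)^2*(vz:ℝ) := by
    rw [hA2eq, integral_finset_sum _ (fun i _ => integrable_finset_sum _ fun j _ => (hA2term i j).1)]
    have hrow : ∀ i : Fin m,
        (∑ j : Fin m, ∫ ω, (X i ω ^ 2 * Z i ω) * (X j ω ^ 2 * Z j ω) ∂μ)
          = 3*(vx:ℝ)^2*(vz:ℝ) := by
      intro i
      rw [Finset.sum_congr rfl (fun j _ => (hA2term i j).2), Finset.sum_ite_eq]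
      simp
    have hstep : ∀ i : Fin m, (∫ ω, ∑ j, (X i ω ^ 2 * Z i ω) * (X j ω ^ 2 * Z j ω) ∂μ)
        = 3*(vx:ℝ)^2*(vz:ℝ) := by
      intro i
      rw [integral_finset_sum _ fun j _ => (hA2term i j).1]
      exact hrow i
    rw [Finset.sum_congr rfl (fun i _ => hstep i), Finset.sum_const]
    simp [Finset.card_univ, nsmul_eq_mul]
    ring_nf
  -- A * (B * C)
  have hABCterm : ∀ i j k : Fin m,
      Integrable (fun ω => (X i ω ^ 2 * Z i ω) * (X j ω ^ 2 * Z k ω)) μ ∧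
      (∫ ω, (X i ω ^ 2 * Z i ω) * (X j ω ^ 2 * Z k ω) ∂μ)
        = (if k = i then (if i = j then 3*(vx:ℝ)^2*(vz:ℝ) else (vx:ℝ)^2*(vz:ℝ)) else 0) := by
    intro i j k
    by_cases hki : k = i
    · subst hki
      by_cases hkj : k = j
      · subst hkj
        obtain ⟨h1, h2⟩ := P8 k k
        have heq : (fun ω => X k ω ^ 4 * Z k ω ^ 2)
            = fun ω => (X k ω ^ 2 * Z k ω) * (X k ω ^ 2 * Z k ω) := by funext ω; ring
        rw [heq] at h1 h2
        exact ⟨h1, by simp [h2]⟩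
      · obtain ⟨h1, h2⟩ := P10 k j k hkj
        have heq : (fun ω => X k ω ^ 2 * (X j ω ^ 2 * Z k ω ^ 2))
            = fun ω => (X k ω ^ 2 * Z k ω) * (X j ω ^ 2 * Z k ω) := by funext ω; ring
        rw [heq] at h1 h2
        exact ⟨h1, by simp [h2, hkj]⟩
    · by_cases hij : i = j
      · subst hij
        obtain ⟨h1, h2⟩ := P9 i i k (fun h => hki h.symm)
        have heq : (fun ω => X i ω ^ 4 * (Z i ω ^ 1 * Z k ω ^ 1))
            = fun ω => (X i ω ^ 2 * Z i ω) * (X i ω ^ 2 * Z k ω) := by funext ω; ring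
        rw [heq] at h1 h2
        exact ⟨h1, by simp [h2, hki]⟩
      · obtain ⟨h1, h2⟩ := P11 i j i k hij (fun h => hki h.symm)
        have heq : (fun ω => X i ω ^ 2 * (X j ω ^ 2 * (Z i ω ^ 1 * Z k ω ^ 1)))
            = fun ω => (X i ω ^ 2 * Z i ω) * (X j ω ^ 2 * Z k ω) := by funext ω; ring
        rw [heq] at h1 h2
        exact ⟨h1, by simp [h2, hki]⟩
  have hABCeq : (fun ω => A ω * (B ω * C ω))
      = fun ω => ∑ i, ∑ j, ∑ k, (X i ω ^ 2 * Z i ω) * (X j ω ^ 2 * Z k ω) := by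
    funext ω; simp only [hA, hB, hC]
    rw [Finset.sum_mul_sum, Finset.sum_mul_sum]
    exact Finset.sum_congr rfl fun i _ => Finset.sum_congr rfl fun j _ => Finset.mul_sum _ _ _
  have hABCint : Integrable (fun ω => A ω * (B ω * C ω)) μ := by
    rw [hABCeq]
    exact integrable_finset_sum _ fun i _ => integrable_finset_sum _ fun j _ =>
      integrable_finset_sum _ fun k _ => (hABCterm i j k).1
  have hABCval : (∫ ω, A ω * (B ω * C ω) ∂μ) = (m:ℝ)*((m:ℝ)+2)*(vx:ℝ)^2*(vz:ℝ) := by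
    rw [hABCeq, integral_finset_sum _ (fun i _ => integrable_finset_sum _ fun j _ =>
      integrable_finset_sum _ fun k _ => (hABCterm i j k).1)]
    have hstep : ∀ i : Fin m, (∫ ω, ∑ j, ∑ k, (X i ω ^ 2 * Z i ω) * (X j ω ^ 2 * Z k ω) ∂μ)
        = ((m:ℝ)+2)*(vx:ℝ)^2*(vz:ℝ) := by
      intro i
      rw [integral_finset_sum _ (fun j _ => integrable_finset_sum _ fun k _ => (hABCterm i j k).1)]
      have hj : ∀ j : Fin m, (∫ ω, ∑ k, (X i ω ^ 2 * Z i ω) * (X j ω ^ 2 * Z k ω) ∂μ)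
          = (if i = j then 3*(vx:ℝ)^2*(vz:ℝ) else (vx:ℝ)^2*(vz:ℝ)) := by
        intro j
        rw [integral_finset_sum _ fun k _ => (hABCterm i j k).1,
          Finset.sum_congr rfl (fun k _ => (hABCterm i j k).2), Finset.sum_ite_eq']
        simp
      rw [Finset.sum_congr rfl (fun j _ => hj j), hpair]
      ring
    rw [Finset.sum_congr rfl (fun i _ => hstep i), Finset.sum_const]
    simp [Finset.card_univ, nsmul_eq_mul]
    ring
  -- (B*C) * (B*C)
  have hB2C2term : ∀ i j k l : Fin m,
      Integrable (fun ω => (X i ω ^ 2 * Z j ω) * (X k ω ^ 2 * Z l ω)) μ ∧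
      (∫ ω, (X i ω ^ 2 * Z j ω) * (X k ω ^ 2 * Z l ω) ∂μ)
        = (if i = k then 3*(vx:ℝ)^2 else (vx:ℝ)^2) * (if j = l then (vz:ℝ) else 0) := by
    intro i j k l
    by_cases hik : i = k
    · subst hik
      by_cases hjl : j = l
      · subst hjl
        obtain ⟨h1, h2⟩ := P8 i j
        have heq : (fun ω => X i ω ^ 4 * Z j ω ^ 2)
            = fun ω => (X i ω ^ 2 * Z j ω) * (X i ω ^ 2 * Z j ω) := by funext ω; ring
        rw [heq] at h1 h2
        refine ⟨h1, by rw [h2]; simp⟩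
      · obtain ⟨h1, h2⟩ := P9 i j l hjl
        have heq : (fun ω => X i ω ^ 4 * (Z j ω ^ 1 * Z l ω ^ 1))
            = fun ω => (X i ω ^ 2 * Z j ω) * (X i ω ^ 2 * Z l ω) := by funext ω; ring
        rw [heq] at h1 h2
        refine ⟨h1, by rw [h2]; simp [hjl]⟩
    · by_cases hjl : j = l
      · subst hjl
        obtain ⟨h1, h2⟩ := P10 i k j hik
        have heq : (fun ω => X i ω ^ 2 * (X k ω ^ 2 * Z j ω ^ 2))
            = fun ω => (X i ω ^ 2 * Z j ω) * (X k ω ^ 2 * Z j ω) := by funext ω; ring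
        rw [heq] at h1 h2
        refine ⟨h1, by rw [h2]; simp [hik]⟩
      · obtain ⟨h1, h2⟩ := P11 i k j l hik hjl
        have heq : (fun ω => X i ω ^ 2 * (X k ω ^ 2 * (Z j ω ^ 1 * Z l ω ^ 1)))
            = fun ω => (X i ω ^ 2 * Z j ω) * (X k ω ^ 2 * Z l ω) := by funext ω; ring
        rw [heq] at h1 h2
        refine ⟨h1, by rw [h2]; simp [hik, hjl]⟩
  have hB2C2eq : (fun ω => (B ω * C ω) * (B ω * C ω))
      = fun ω => ∑ i, ∑ k, ∑ j, ∑ l, (X i ω ^ 2 * Z j ω) * (X k ω ^ 2 * Z l ω) := by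
    funext ω; simp only [hB, hC]
    rw [Finset.sum_mul_sum, Finset.sum_mul_sum]
    refine Finset.sum_congr rfl fun i _ => Finset.sum_congr rfl fun k _ => ?_
    rw [Finset.sum_mul_sum]
  have hB2C2int : Integrable (fun ω => (B ω * C ω) * (B ω * C ω)) μ := by
    rw [hB2C2eq]
    exact integrable_finset_sum _ fun i _ => integrable_finset_sum _ fun k _ =>
      integrable_finset_sum _ fun j _ => integrable_finset_sum _ fun l _ => (hB2C2term i j k l).1
  have hB2C2val : (∫ ω, (B ω * C ω) * (B ω * C ω) ∂μ)
      = (m:ℝ)^2*((m:ℝ)+2)*(vx:ℝ)^2*(vz:ℝ) := by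
    rw [hB2C2eq, integral_finset_sum _ (fun i _ => integrable_finset_sum _ fun k _ =>
      integrable_finset_sum _ fun j _ => integrable_finset_sum _ fun l _ => (hB2C2term i j k l).1)]
    have hstepi : ∀ i : Fin m,
        (∫ ω, ∑ k, ∑ j, ∑ l, (X i ω ^ 2 * Z j ω) * (X k ω ^ 2 * Z l ω) ∂μ)
          = (m:ℝ)*((m:ℝ)+2)*(vx:ℝ)^2*(vz:ℝ) := by
      intro i
      rw [integral_finset_sum _ (fun k _ => integrable_finset_sum _ fun j _ =>
        integrable_finset_sum _ fun l _ => (hB2C2term i j k l).1)]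
      have hstepk : ∀ k : Fin m,
          (∫ ω, ∑ j, ∑ l, (X i ω ^ 2 * Z j ω) * (X k ω ^ 2 * Z l ω) ∂μ)
            = (if i = k then 3*(vx:ℝ)^2 else (vx:ℝ)^2) * ((m:ℝ) * (vz:ℝ)) := by
        intro k
        rw [integral_finset_sum _ (fun j _ => integrable_finset_sum _ fun l _ =>
          (hB2C2term i j k l).1)]
        have hstepj : ∀ j : Fin m,
            (∫ ω, ∑ l, (X i ω ^ 2 * Z j ω) * (X k ω ^ 2 * Z l ω) ∂μ)
              = (if i = k then 3*(vx:ℝ)^2 else (vx:ℝ)^2) * (vz:ℝ) := by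
          intro j
          rw [integral_finset_sum _ fun l _ => (hB2C2term i j k l).1,
            Finset.sum_congr rfl (fun l _ => (hB2C2term i j k l).2), ← Finset.mul_sum,
            Finset.sum_ite_eq]
          simp
        rw [Finset.sum_congr rfl (fun j _ => hstepj j), Finset.sum_const]
        simp [Finset.card_univ, nsmul_eq_mul]
        ring
      rw [Finset.sum_congr rfl (fun k _ => hstepk k),
        Finset.sum_congr rfl (fun k _ => rfl)]
      have := hpair (3*(vx:ℝ)^2 * ((m:ℝ)*(vz:ℝ))) ((vx:ℝ)^2 * ((m:ℝ)*(vz:ℝ)))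
      calc (∑ k : Fin m, (if i = k then 3*(vx:ℝ)^2 else (vx:ℝ)^2) * ((m:ℝ) * (vz:ℝ)))
          = ∑ k : Fin m, (if i = k then 3*(vx:ℝ)^2 * ((m:ℝ)*(vz:ℝ))
              else (vx:ℝ)^2 * ((m:ℝ)*(vz:ℝ))) := by
            refine Finset.sum_congr rfl fun k _ => ?_
            split <;> ring
        _ = (m:ℝ) * ((vx:ℝ)^2 * ((m:ℝ)*(vz:ℝ)))
              + (3*(vx:ℝ)^2 * ((m:ℝ)*(vz:ℝ)) - (vx:ℝ)^2 * ((m:ℝ)*(vz:ℝ))) := hpair _ _ i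
        _ = (m:ℝ)*((m:ℝ)+2)*(vx:ℝ)^2*(vz:ℝ) := by ring
    rw [Finset.sum_congr rfl (fun i _ => hstepi i), Finset.sum_const]
    simp [Finset.card_univ, nsmul_eq_mul]
    ring
  -- assemble
  have hTmeas : Measurable (fun ω => c1 * A ω - c2 * (B ω * C ω)) :=
    ((hAmeas.const_mul c1).sub ((hBmeas.mul hCmeas).const_mul c2))
  have hT2eq : (fun ω => (c1 * A ω - c2 * (B ω * C ω))^2)
      = fun ω => ((c1*c1) * (A ω * A ω) - (2*c1*c2) * (A ω * (B ω * C ω)))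
          + (c2*c2) * ((B ω * C ω) * (B ω * C ω)) := by
    funext ω; ring
  have hT2int : Integrable (fun ω => (c1 * A ω - c2 * (B ω * C ω))^2) μ := by
    rw [hT2eq]
    exact ((hA2int.const_mul _).sub (hABCint.const_mul _)).add (hB2C2int.const_mul _)
  have hmem : MemLp (fun ω => c1 * A ω - c2 * (B ω * C ω)) 2 μ :=
    (memLp_two_iff_integrable_sq hTmeas.aestronglyMeasurable).mpr hT2int
  rw [variance_eq_sub hmem]
  have hTval : (∫ ω, (c1 * A ω - c2 * (B ω * C ω)) ∂μ) = 0 := by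
    rw [integral_sub (hAint.const_mul c1) (hBCint.const_mul c2), integral_const_mul,
      integral_const_mul, hAval, hBCval]
    ring
  have hT2val : (∫ ω, (c1 * A ω - c2 * (B ω * C ω))^2 ∂μ)
      = ((c1*c1) * (3*(m:ℝ)*(vx:ℝ)^2*(vz:ℝ))
          - (2*c1*c2) * ((m:ℝ)*((m:ℝ)+2)*(vx:ℝ)^2*(vz:ℝ)))
          + (c2*c2) * ((m:ℝ)^2*((m:ℝ)+2)*(vx:ℝ)^2*(vz:ℝ)) := by
    have hI1 : Integrable (fun ω => (c1*c1) * (A ω * A ω)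
        - (2*c1*c2) * (A ω * (B ω * C ω))) μ := (hA2int.const_mul _).sub (hABCint.const_mul _)
    have hI2 : Integrable (fun ω => (c2*c2) * ((B ω * C ω) * (B ω * C ω))) μ :=
      hB2C2int.const_mul _
    have hI3 : Integrable (fun ω => (c1*c1) * (A ω * A ω)) μ := hA2int.const_mul _
    have hI4 : Integrable (fun ω => (2*c1*c2) * (A ω * (B ω * C ω))) μ := hABCint.const_mul _
    rw [hT2eq, integral_add hI1 hI2, integral_sub hI3 hI4,
      integral_const_mul, integral_const_mul, integral_const_mul, hA2val, hABCval, hB2C2val]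
  have hpow : ((fun ω => c1 * A ω - c2 * (B ω * C ω)) ^ 2 : Ω → ℝ)
      = fun ω => (c1 * A ω - c2 * (B ω * C ω))^2 := rfl
  rw [hpow, hT2val]
  rw [show (μ[fun ω => c1 * A ω - c2 * (B ω * C ω)]) = (0:ℝ) from hTval]
  simp only [hc1, hc2]
  field_simp
  ring
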